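/- Let k be a field, V a finite-dimensional k-vector space, S = Sym(V) with its standard grading, and M a graded S-module with M_m = 0 for all m < 0. Fix p ≥ 0. Then the degree-p homogeneous component of Tor_p^S(M, k) is isomorphic to the kernel of the Koszul differential M_0 ⊗ ∧^{p}V → M_1 ⊗ ∧^{p-1}V. Moreover, for every q < 0, the degree-(p+q) homogeneous component of Tor_p^S(M, k) vanishes. -/

import Mathlib

universe u

open TensorAlgebra in
/-- The relation on the tensor algebra defining the symmetric algebra. -/
inductive SymRel (k : Type u) (V : Type u) [CommRing k] [AddCommGroup V] [Module k V] :
    TensorAlgebra k V → TensorAlgebra k V → Prop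
  | mul_comm (x y : V) : SymRel k V (ι k x * ι k y) (ι k y * ι k x)

/-- The symmetric algebra `Sym(V)` of a `k`-module `V`, as the quotient of the tensor
algebra by the commutativity relations. -/
def SymmetricAlg (k : Type u) (V : Type u) [CommRing k] [AddCommGroup V] [Module k V] : Type u :=
  RingQuot (SymRel k V)

namespace SymmetricAlg

variable (k V : Type u) [CommRing k] [AddCommGroup V] [Module k V]

instance : Ring (SymmetricAlg k V) := inferInstanceAs (Ring (RingQuot (SymRel k V)))
instance : Algebra k (SymmetricAlg k V) := inferInstanceAs (Algebra k (RingQuot (SymRel k V)))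

/-- The canonical inclusion of `V` into `Sym(V)`. -/
def ιSym : V →ₗ[k] SymmetricAlg k V :=
  ((RingQuot.mkAlgHom k (SymRel k V)).toLinearMap).comp (TensorAlgebra.ι k)

lemma comm_aux (x : TensorAlgebra k V) :
    ∀ y : TensorAlgebra k V, RingQuot.mkAlgHom k (SymRel k V) x * RingQuot.mkAlgHom k (SymRel k V) y
      = RingQuot.mkAlgHom k (SymRel k V) y * RingQuot.mkAlgHom k (SymRel k V) x := by
  induction x using TensorAlgebra.induction with
  | algebraMap r =>
      intro y
      rw [AlgHom.commutes]
      exact Algebra.commutes r _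
  | ι v =>
      intro y
      induction y using TensorAlgebra.induction with
      | algebraMap r =>
          rw [AlgHom.commutes]
          exact (Algebra.commutes r _).symm
      | ι w =>
          have := RingQuot.mkAlgHom_rel k (SymRel.mul_comm (k := k) (V := V) v w)
          rwa [map_mul, map_mul] at this
      | mul y₁ y₂ h1 h2 =>
          rw [map_mul, ← mul_assoc, h1, mul_assoc, h2, mul_assoc]
      | add y₁ y₂ h1 h2 =>
          rw [map_add, add_mul, mul_add, h1, h2]
  | mul x₁ x₂ h1 h2 =>
      intro y
      rw [map_mul, mul_assoc, h2 y, ← mul_assoc, h1 y, mul_assoc]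
  | add x₁ x₂ h1 h2 =>
      intro y
      rw [map_add, add_mul, mul_add, h1 y, h2 y]

instance : CommRing (SymmetricAlg k V) :=
  { (inferInstanceAs (Ring (SymmetricAlg k V)) : Ring (SymmetricAlg k V)) with
    mul_comm := fun a b => by
      obtain ⟨x, rfl⟩ := RingQuot.mkAlgHom_surjective k (SymRel k V) a
      obtain ⟨y, rfl⟩ := RingQuot.mkAlgHom_surjective k (SymRel k V) b
      exact comm_aux k V x y }

/-- The augmentation map `Sym(V) → k` killing `V`. -/
def aug : SymmetricAlg k V →ₐ[k] k :=
  RingQuot.liftAlgHom k ⟨TensorAlgebra.lift k (0 : V →ₗ[k] k), by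
    rintro x y ⟨a, b⟩
    simp⟩

end SymmetricAlg

open scoped TensorProduct

/-- The `n`-fold wedge `v₁ ∧ ⋯ ∧ vₙ`, as an element of the `n`-th exterior power. -/
def wedge (k : Type u) {V : Type u} [CommRing k] [AddCommGroup V] [Module k V]
    {n : ℕ} (v : Fin n → V) : ⋀[k]^n V :=
  ⟨ExteriorAlgebra.ιMulti k n v, ExteriorAlgebra.ιMulti_range k n (Set.mem_range_self v)⟩

/-- For a graded module `M = ⊕ 𝓜 m`, the degree-`n` strand of the Koszul complex at
homological index `j`: the subspace `𝓜 (n - j) ⊗ ∧^j V` of `M ⊗ ∧^j V`. -/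
noncomputable def koszulStrand {k V M : Type u} [Field k] [AddCommGroup V] [Module k V]
    [AddCommGroup M] [Module k M] (𝓜 : ℤ → Submodule k M) (n : ℤ) (j : ℕ) :
    Submodule k (M ⊗[k] ⋀[k]^j V) :=
  LinearMap.range (LinearMap.rTensor (⋀[k]^j V) (𝓜 (n - j)).subtype)

lemma strand_bot {k V M : Type u} [Field k] [AddCommGroup V] [Module k V]
    [AddCommGroup M] [Module k M] (𝓜 : ℤ → Submodule k M) (n : ℤ) (j : ℕ)
    (h : 𝓜 (n - j) = ⊥) : koszulStrand (V := V) 𝓜 n j = ⊥ := by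
  rw [koszulStrand, LinearMap.range_eq_bot]
  apply TensorProduct.ext'
  intro x y
  have hx : (x : M) = 0 := (Submodule.eq_bot_iff _).mp h x.1 x.2
  simp [LinearMap.rTensor_tmul, hx]

lemma range_rTensor_congr {k M W : Type u} [Field k] [AddCommGroup M] [Module k M]
    [AddCommGroup W] [Module k W] {A B : Submodule k M} (h : A = B) :
    LinearMap.range (LinearMap.rTensor W A.subtype)
      = LinearMap.range (LinearMap.rTensor W B.subtype) := by subst h; rfl

set_option maxHeartbeats 1000000 in
set_option synthInstance.maxHeartbeats 400000 in
/-- Let `M` be a graded module over `S = Sym(V)` with `𝓜 m = 0` for `m < 0`,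
and fix `p ≥ 0`.  Then the degree-`p` homogeneous component of `Tor_p^S(M,k)` — i.e. the homology
at homological index `p` of the degree-`p` strand of the Koszul complex `M ⊗ ∧^• V` — is
isomorphic to the kernel of the Koszul differential `𝓜 0 ⊗ ∧^p V → 𝓜 1 ⊗ ∧^{p-1} V`.
Moreover for every `q < 0` the degree-`(p+q)` homogeneous component of `Tor_p^S(M,k)` vanishes,
i.e. the corresponding strand of the Koszul complex is exact at homological index `p`. -/
theorem statement5 (k V M : Type u) [Field k] [AddCommGroup V] [Module k V]
    [FiniteDimensional k V]
    [AddCommGroup M] [Module k M] [Module (SymmetricAlg k V) M]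
    [IsScalarTower k (SymmetricAlg k V) M]
    -- the grading on `M`, making it a graded `S`-module, vanishing in negative degrees
    (𝓜 : ℤ → Submodule k M)
    (hinternal : DirectSum.IsInternal fun m : ℤ => 𝓜 m)
    (hgr : ∀ (m : ℤ) (v : V) (x : M), x ∈ 𝓜 m → SymmetricAlg.ιSym k V v • x ∈ 𝓜 (m + 1))
    (hneg : ∀ m : ℤ, m < 0 → 𝓜 m = ⊥)
    -- the Koszul differentials of the complex `M ⊗ ∧^• V`
    (d : ∀ j : ℕ, (M ⊗[k] ⋀[k]^j V) →ₗ[k] (M ⊗[k] ⋀[k]^(j - 1) V))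
    (hd0 : d 0 = 0)
    (hd : ∀ (j : ℕ) (m : M) (v : Fin (j + 1) → V),
      d (j + 1) (m ⊗ₜ[k] wedge k v) =
        ∑ i : Fin (j + 1), ((-1 : ℤ) ^ (i : ℕ)) •
          ((SymmetricAlg.ιSym k V (v i) • m) ⊗ₜ[k]
            wedge k (fun l : Fin j => v (i.succAbove l))))
    (p : ℕ)
    -- the Koszul differential `𝓜 0 ⊗ ∧^p V → 𝓜 1 ⊗ ∧^{p-1} V`, characterised as the
    -- restriction of the Koszul differential `d p` to the graded pieces
    (D : (↥(𝓜 0) ⊗[k] ⋀[k]^p V) →ₗ[k] (↥(𝓜 1) ⊗[k] ⋀[k]^(p - 1) V))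
    (hD : (LinearMap.rTensor (⋀[k]^(p - 1) V) (𝓜 1).subtype).comp D =
      (d p).comp (LinearMap.rTensor (⋀[k]^p V) (𝓜 0).subtype)) :
    (∃ φ : ↥(koszulStrand (V := V) 𝓜 (p : ℤ) p ⊓ LinearMap.ker (d p)) →ₗ[k]
        ↥(LinearMap.ker D),
      Function.Surjective φ ∧
      LinearMap.ker φ =
        Submodule.comap (koszulStrand (V := V) 𝓜 (p : ℤ) p ⊓ LinearMap.ker (d p)).subtype
          (Submodule.map (d (p + 1)) (koszulStrand (V := V) 𝓜 (p : ℤ) (p + 1)))) ∧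
    (∀ q : ℤ, q < 0 →
      koszulStrand (V := V) 𝓜 ((p : ℤ) + q) p ⊓ LinearMap.ker (d p) ≤
        Submodule.map (d (p + 1)) (koszulStrand (V := V) 𝓜 ((p : ℤ) + q) (p + 1))) := by
  classical
  set ι₀ := LinearMap.rTensor (⋀[k]^p V) (𝓜 0).subtype with hι₀def
  set ι₁ := LinearMap.rTensor (⋀[k]^(p - 1) V) (𝓜 1).subtype with hι₁def
  have h₀ : Function.Injective ι₀ :=
    Module.Flat.rTensor_preserves_injective_linearMap _ (Submodule.injective_subtype _)
  have h₁ : Function.Injective ι₁ :=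
    Module.Flat.rTensor_preserves_injective_linearMap _ (Submodule.injective_subtype _)
  have hstrand : koszulStrand (V := V) 𝓜 (p : ℤ) p = LinearMap.range ι₀ :=
    range_rTensor_congr (congrArg 𝓜 (sub_self _))
  have hstrand1 : koszulStrand (V := V) 𝓜 (p : ℤ) (p + 1) = ⊥ :=
    strand_bot (V := V) 𝓜 _ _ (by
      have : (p : ℤ) - ((p + 1 : ℕ) : ℤ) = -1 := by push_cast; ring
      rw [this]; exact hneg _ (by norm_num))
  constructor
  · set S := koszulStrand (V := V) 𝓜 (p : ℤ) p ⊓ LinearMap.ker (d p) with hS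
    have hle : S ≤ LinearMap.range ι₀ := le_trans inf_le_left hstrand.le
    set e := LinearEquiv.ofInjective ι₀ h₀ with he
    set ψ : ↥S →ₗ[k] (↥(𝓜 0) ⊗[k] ⋀[k]^p V) :=
      e.symm.toLinearMap.comp (Submodule.inclusion hle) with hψ
    have key : ∀ x : ↥S, ι₀ (ψ x) = (x : M ⊗[k] ⋀[k]^p V) := by
      intro x
      have h2 : e (ψ x) = Submodule.inclusion hle x := e.apply_symm_apply _
      have h1 : ((e (ψ x) : ↥(LinearMap.range ι₀)) : M ⊗[k] ⋀[k]^p V) = ι₀ (ψ x) :=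
        LinearEquiv.ofInjective_apply ι₀ (ψ x)
      rw [← h1, h2]; rfl
    have hdcomm : ∀ y : ↥(𝓜 0) ⊗[k] ⋀[k]^p V, ι₁ (D y) = d p (ι₀ y) := by
      intro y; exact LinearMap.congr_fun hD y
    have hkerD : ∀ x : ↥S, ψ x ∈ LinearMap.ker D := by
      intro x
      have hx : d p (x : M ⊗[k] ⋀[k]^p V) = 0 := x.2.2
      have : ι₁ (D (ψ x)) = 0 := by rw [hdcomm, key, hx]
      have h0 : D (ψ x) = 0 := by
        apply h₁; rw [this, map_zero]
      exact h0
    refine ⟨LinearMap.codRestrict _ ψ hkerD, ?_, ?_⟩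
    · rintro ⟨x, hx⟩
      have hxker : D x = 0 := hx
      have hz1 : ι₀ x ∈ koszulStrand (V := V) 𝓜 (p : ℤ) p := by
        rw [hstrand]; exact LinearMap.mem_range_self _ _
      have hz2 : d p (ι₀ x) = 0 := by rw [← hdcomm, hxker, map_zero]
      refine ⟨⟨ι₀ x, ⟨hz1, hz2⟩⟩, ?_⟩
      apply Subtype.ext
      show ψ ⟨ι₀ x, _⟩ = x
      apply h₀
      rw [key]
    · have hker : LinearMap.ker (LinearMap.codRestrict _ ψ hkerD) = ⊥ := by
        rw [LinearMap.ker_codRestrict]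
        apply LinearMap.ker_eq_bot_of_injective
        intro a b hab
        apply Subtype.ext
        rw [← key a, ← key b, hab]
      rw [hker, hstrand1, Submodule.map_bot, Submodule.comap_bot, Submodule.ker_subtype]
  · intro q hq
    have hbot : koszulStrand (V := V) 𝓜 ((p : ℤ) + q) p = ⊥ :=
      strand_bot (V := V) 𝓜 _ _ (by
        rw [show (p : ℤ) + q - (p : ℕ) = q by push_cast; ring]
        exact hneg q hq)
    rw [hbot]
    simp
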